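/- Let n ≥ k ≥ 1, let a_1, …, a_n be nonzero real numbers, c_1, …, c_n arbitrary real numbers, and fix an index i ∈ {1,…,n}. Then Σ_{(j_1,…,j_k)∈I_{k,i}} c_{j_1}⋯c_{j_k} · V(a_{j_1},…,a_{j_k},a_i) · a_{j_1}¹ a_{j_2}² ⋯ a_{j_k}^k = (−1)^k · Σ_{(j_1,…,j_k)∈I_k^+} c_{j_1}⋯c_{j_k} · a_{j_1}² ⋯ a_{j_k}² · V(a_{j_1},…,a_{j_k})² · ∏_{l=1}^k (1 − a_i/a_{j_l}), where I_{k,i} is the set of k-tuples of pairwise distinct indices from {1,…,n} all different from i and I_k^+ is the set of strictly decreasing k-tuples n ≥ j_1 > … > j_k ≥ 1. -/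
import Mathlib


open Finset

/-- Vandermonde product V(x_1,…,x_m) = ∏_{q<r} (x_r − x_q). -/
def vand {m : ℕ} (x : Fin m → ℝ) : ℝ :=
  ∏ r : Fin m, ∏ q ∈ Finset.univ.filter (fun q => q < r), (x r - x q)

lemma vand_eq_det {m : ℕ} (x : Fin m → ℝ) : vand x = (Matrix.vandermonde x).det := by
  rw [Matrix.det_vandermonde, vand]
  rw [Finset.prod_comm' (s := Finset.univ) (t := fun r => Finset.univ.filter (fun q => q < r))
    (t' := Finset.univ) (s' := fun q => Finset.Ioi q)]
  intro q r
  simp [Finset.mem_Ioi]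

lemma vand_comp_perm {m : ℕ} (x : Fin m → ℝ) (σ : Equiv.Perm (Fin m)) :
    vand (x ∘ σ) = (Equiv.Perm.sign σ : ℝ) * vand x := by
  rw [vand_eq_det, vand_eq_det]
  have : Matrix.vandermonde (x ∘ σ) = (Matrix.vandermonde x).submatrix σ id := by
    ext i j; simp [Matrix.vandermonde]
  rw [this, Matrix.det_permute]

lemma vand_snoc {m : ℕ} (x : Fin m → ℝ) (b : ℝ) :
    vand (Fin.snoc x b) = vand x * ∏ l, (b - x l) := by
  unfold vand
  simp only [Finset.prod_filter, Fin.prod_univ_castSucc, Fin.snoc_castSucc, Fin.snoc_last,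
    Fin.castSucc_lt_castSucc_iff, Fin.castSucc_lt_last, if_true, lt_irrefl, if_false, mul_one]
  have h1 : ∀ r : Fin m, ¬ (Fin.last m < Fin.castSucc r) :=
    fun r => (Fin.castSucc_lt_last r).asymm
  simp only [if_neg (h1 _), mul_one]

lemma sum_sign_prod_pow {k : ℕ} (y : Fin k → ℝ) :
    ∑ σ : Equiv.Perm (Fin k), (Equiv.Perm.sign σ : ℝ) * ∏ l, y (σ l) ^ ((l : ℕ) + 1)
      = (∏ l, y l) * vand y := by
  have hM : (Matrix.of fun i j : Fin k => y i ^ ((j : ℕ) + 1))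
      = Matrix.diagonal y * Matrix.vandermonde y := by
    ext i j
    simp [Matrix.diagonal_mul, Matrix.vandermonde, pow_succ, mul_comm]
  have := congrArg Matrix.det hM
  rw [Matrix.det_mul, Matrix.det_diagonal, ← vand_eq_det, Matrix.det_apply] at this
  rw [← this]
  apply Finset.sum_congr rfl
  intro σ _
  simp [Units.smul_def, zsmul_eq_mul]

lemma key_perm_sum {k : ℕ} (y : Fin k → ℝ) (b : ℝ) :
    ∑ σ : Equiv.Perm (Fin k), vand (Fin.snoc (y ∘ σ) b) * ∏ l, y (σ l) ^ ((l : ℕ) + 1)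
      = vand y ^ 2 * (∏ l, y l) * ∏ l, (b - y l) := by
  have h : ∀ σ : Equiv.Perm (Fin k),
      vand (Fin.snoc (y ∘ σ) b) * ∏ l, y (σ l) ^ ((l : ℕ) + 1)
        = (∏ l, (b - y l)) * (vand y * ((Equiv.Perm.sign σ : ℝ) * ∏ l, y (σ l) ^ ((l : ℕ) + 1))) := by
    intro σ
    rw [vand_snoc, vand_comp_perm]
    have : ∏ l, (b - (y ∘ σ) l) = ∏ l, (b - y l) := Equiv.prod_comp σ (fun t => b - y t)
    rw [this]; ring
  rw [Finset.sum_congr rfl (fun σ _ => h σ), ← Finset.mul_sum, ← Finset.mul_sum,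
    sum_sign_prod_pow]
  ring

open Classical in
lemma reindex {n k : ℕ} (i : Fin n) (f : (Fin k → Fin n) → ℝ) :
    ∑ j ∈ Finset.univ.filter
        (fun j : Fin k → Fin n => Function.Injective j ∧ ∀ l, j l ≠ i), f j
      = ∑ t ∈ Finset.univ.filter
          (fun t : Fin k → Fin n => StrictAnti t ∧ ∀ l, t l ≠ i),
          ∑ σ : Equiv.Perm (Fin k), f (t ∘ σ) := by
  rw [← Finset.sum_product']
  symm
  apply Finset.sum_bij (fun p _ => p.1 ∘ p.2)
  · rintro ⟨t, σ⟩ hp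
    simp only [Finset.mem_product, Finset.mem_filter, Finset.mem_univ, true_and] at hp ⊢
    exact ⟨hp.1.1.injective.comp σ.injective, fun l => hp.1.2 (σ l)⟩
  · rintro ⟨t₁, σ₁⟩ h₁ ⟨t₂, σ₂⟩ h₂ heq
    simp only [Finset.mem_product, Finset.mem_filter, Finset.mem_univ, true_and] at h₁ h₂
    have hr : Set.range (t₁ ∘ σ₁) = Set.range (t₂ ∘ σ₂) := by rw [heq]
    rw [Set.range_comp, Set.range_comp, σ₁.surjective.range_eq, σ₂.surjective.range_eq,
      Set.image_univ, Set.image_univ] at hr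
    have ht : t₁ = t₂ := Set.range_injOn_strictAnti (Set.mem_setOf.mpr h₁.1.1)
      (Set.mem_setOf.mpr h₂.1.1) hr
    subst ht
    have hσ : σ₁ = σ₂ := by
      ext l
      exact Fin.val_eq_of_eq (h₁.1.1.injective (congrFun heq l))
    rw [hσ]
  · intro j hj
    simp only [Finset.mem_filter, Finset.mem_univ, true_and] at hj
    obtain ⟨hinj, havoid⟩ := hj
    set s : Finset (Fin n) := Finset.image j Finset.univ with hs
    have hcard : s.card = k := by
      rw [hs, Finset.card_image_of_injective _ hinj, Finset.card_univ, Fintype.card_fin]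
    set t : Fin k → Fin n := fun l => s.orderEmbOfFin hcard l.rev with htdef
    have htanti : StrictAnti t := fun p q hpq =>
      (s.orderEmbOfFin hcard).strictMono (Fin.rev_lt_rev.mpr hpq)
    have hranget : Set.range t = ↑s := by
      show Set.range ((s.orderEmbOfFin hcard) ∘ Fin.rev) = ↑s
      rw [Set.range_comp, Fin.rev_surjective.range_eq, Set.image_univ,
        Finset.range_orderEmbOfFin]
    have hrangej : Set.range j = ↑s := by
      rw [hs]; ext x; simp [Set.range]
    have hrange : Set.range j = Set.range t := by rw [hrangej, hranget]
    let ej : Fin k ≃ Set.range j := Equiv.ofInjective j hinj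
    let et : Fin k ≃ Set.range t := Equiv.ofInjective t htanti.injective
    let σ : Equiv.Perm (Fin k) := (ej.trans (Equiv.setCongr hrange)).trans et.symm
    have hts : t ∘ σ = j := by
      funext l
      have : et (σ l) = Equiv.setCongr hrange (ej l) := by
        simp [σ, Equiv.apply_symm_apply]
      have h2 : (et (σ l) : Fin n) = j l := by
        rw [this]; rfl
      simpa [et, Equiv.ofInjective] using h2
    refine ⟨⟨t, σ⟩, ?_, hts⟩
    simp only [Finset.mem_product, Finset.mem_filter, Finset.mem_univ, true_and]
    refine ⟨⟨htanti, fun l => ?_⟩, trivial⟩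
    intro hli
    exact havoid (σ.symm l) (by rw [← hts]; simp [hli])
  · intro p _; rfl

open Classical in
/-- for nonzero a's and a fixed index i,
Σ_{(j_1,…,j_k)∈I_{k,i}} c_{j_1}⋯c_{j_k} V(a_{j_1},…,a_{j_k},a_i) a_{j_1}¹ a_{j_2}² ⋯ a_{j_k}^k
= (−1)^k Σ_{(j_1,…,j_k)∈I_k^+} c_{j_1}⋯c_{j_k} a_{j_1}²⋯a_{j_k}² V(a_{j_1},…,a_{j_k})²
∏_{l=1}^k (1 − a_i/a_{j_l}). -/
theorem stmt7 {n : ℕ} (k : ℕ) (hk1 : 1 ≤ k) (hkn : k ≤ n)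
    (a c : Fin n → ℝ) (ha : ∀ j, a j ≠ 0) (i : Fin n) :
    ∑ j ∈ Finset.univ.filter
        (fun j : Fin k → Fin n => Function.Injective j ∧ ∀ l, j l ≠ i),
        (∏ l, c (j l)) * vand (Fin.snoc (fun l => a (j l)) (a i)) *
          ∏ l, a (j l) ^ ((l : ℕ) + 1)
      = (-1 : ℝ) ^ k *
          ∑ j ∈ Finset.univ.filter (fun j : Fin k → Fin n => StrictAnti j),
            (∏ l, c (j l)) * (∏ l, a (j l) ^ 2) * vand (fun l => a (j l)) ^ 2 *
              ∏ l, (1 - a i / a (j l)) := by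
  classical
  -- restrict the RHS sum to tuples avoiding i
  have hres : ∑ j ∈ Finset.univ.filter (fun j : Fin k → Fin n => StrictAnti j),
        (∏ l, c (j l)) * (∏ l, a (j l) ^ 2) * vand (fun l => a (j l)) ^ 2 *
          ∏ l, (1 - a i / a (j l))
      = ∑ j ∈ Finset.univ.filter
          (fun j : Fin k → Fin n => StrictAnti j ∧ ∀ l, j l ≠ i),
        (∏ l, c (j l)) * (∏ l, a (j l) ^ 2) * vand (fun l => a (j l)) ^ 2 *
          ∏ l, (1 - a i / a (j l)) := by
    rw [← Finset.filter_filter]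
    symm
    apply Finset.sum_filter_of_ne
    intro j _ hne l
    intro hli
    apply hne
    have h0 : ∏ l, (1 - a i / a (j l)) = 0 :=
      Finset.prod_eq_zero (Finset.mem_univ l) (by rw [hli, div_self (ha i)]; ring)
    rw [h0, mul_zero]
  rw [hres, reindex i, Finset.mul_sum]
  apply Finset.sum_congr rfl
  intro t ht
  simp only [Finset.mem_filter, Finset.mem_univ, true_and] at ht
  -- Left side: sum over permutations
  have hL : ∑ σ : Equiv.Perm (Fin k),
      (∏ l, c ((t ∘ σ) l)) * vand (Fin.snoc (fun l => a ((t ∘ σ) l)) (a i)) *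
        ∏ l, a ((t ∘ σ) l) ^ ((l : ℕ) + 1)
      = (∏ l, c (t l)) *
          (vand (fun l => a (t l)) ^ 2 * (∏ l, a (t l)) * ∏ l, (a i - a (t l))) := by
    have hc : ∀ σ : Equiv.Perm (Fin k), ∏ l, c ((t ∘ σ) l) = ∏ l, c (t l) :=
      fun σ => Equiv.prod_comp σ (fun l => c (t l))
    calc ∑ σ : Equiv.Perm (Fin k),
        (∏ l, c ((t ∘ σ) l)) * vand (Fin.snoc (fun l => a ((t ∘ σ) l)) (a i)) *
          ∏ l, a ((t ∘ σ) l) ^ ((l : ℕ) + 1)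
        = ∑ σ : Equiv.Perm (Fin k), (∏ l, c (t l)) *
            (vand (Fin.snoc ((fun l => a (t l)) ∘ σ) (a i)) *
              ∏ l, (fun l => a (t l)) (σ l) ^ ((l : ℕ) + 1)) := by
          apply Finset.sum_congr rfl
          intro σ _
          rw [hc σ]
          exact mul_assoc _ _ _
      _ = (∏ l, c (t l)) * ∑ σ : Equiv.Perm (Fin k),
            vand (Fin.snoc ((fun l => a (t l)) ∘ σ) (a i)) *
              ∏ l, (fun l => a (t l)) (σ l) ^ ((l : ℕ) + 1) := by
          rw [Finset.mul_sum]
      _ = _ := by rw [key_perm_sum (fun l => a (t l)) (a i)]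
  rw [hL]
  -- Right side algebra
  have hfac : ∀ l : Fin k, (-1 : ℝ) * a (t l) ^ 2 * (1 - a i / a (t l))
      = a (t l) * (a i - a (t l)) := by
    intro l
    have h := ha (t l)
    field_simp
    ring
  have key : (-1 : ℝ) ^ k * (∏ l, a (t l) ^ 2) * ∏ l, (1 - a i / a (t l))
      = (∏ l, a (t l)) * ∏ l, (a i - a (t l)) := by
    calc (-1 : ℝ) ^ k * (∏ l, a (t l) ^ 2) * ∏ l, (1 - a i / a (t l))
        = ∏ l, ((-1 : ℝ) * a (t l) ^ 2 * (1 - a i / a (t l))) := by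
          rw [Finset.prod_mul_distrib, Finset.prod_mul_distrib, Finset.prod_const,
            Finset.card_univ, Fintype.card_fin]
      _ = ∏ l, (a (t l) * (a i - a (t l))) :=
          Finset.prod_congr rfl (fun l _ => hfac l)
      _ = (∏ l, a (t l)) * ∏ l, (a i - a (t l)) := Finset.prod_mul_distrib
  linear_combination (-((∏ l, c (t l)) * (vand fun l => a (t l)) ^ 2)) * key
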